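/- For a = t²(s² - t²)²(s² + t²), b = s²(s² - t²)²(s² + t²), c = 4s⁴t⁴, the three elementary symmetric functions a + b + c, ab + bc + ca, and abc are all perfect squares (squares of polynomials in s, t with integer coefficients). -/
import Mathlib

theorem parmsol1 (s t : ℤ) :
    let a := t ^ 2 * (s ^ 2 - t ^ 2) ^ 2 * (s ^ 2 + t ^ 2)
    let b := s ^ 2 * (s ^ 2 - t ^ 2) ^ 2 * (s ^ 2 + t ^ 2)
    let c := 4 * s ^ 4 * t ^ 4
    (∃ f : ℤ, a + b + c = f ^ 2) ∧ (∃ g : ℤ, a * b + b * c + c * a = g ^ 2) ∧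
      (∃ k : ℤ, a * b * c = k ^ 2) := by
  refine ⟨⟨s ^ 4 + t ^ 4, by ring⟩,
    ⟨s * t * (s ^ 2 + t ^ 2) ^ 2 * (s ^ 2 - t ^ 2), by ring⟩,
    ⟨2 * s ^ 3 * t ^ 3 * (s ^ 2 - t ^ 2) ^ 2 * (s ^ 2 + t ^ 2), by ring⟩⟩
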